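/- Let L : R^p → R be convex and differentiable, let R be a norm with dual norm R*, and fix δ* ∈ R^p with R(δ*) ≤ l. Let δ̂ be a minimizer of δ ↦ L(δ) + λ R(δ) with λ ≥ 2 R*(∇L(δ*)). Then the error Δ̂ = δ̂ − δ* satisfies R(Δ̂) ≤ 4 l. -/

import Mathlib

open scoped RealInnerProductSpace

lemma aux_grad {p : ℕ} (L : EuclideanSpace ℝ (Fin p) → ℝ)
    (hc : ConvexOn ℝ Set.univ L) (hd : Differentiable ℝ L)
    (x y : EuclideanSpace ℝ (Fin p)) : L x + ⟪gradient L x, y - x⟫ ≤ L y := by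
  have hgrad : HasFDerivAt L ((InnerProductSpace.toDual ℝ _) (gradient L x)) x :=
    hasGradientAt_iff_hasFDerivAt.mp (hd x).hasGradientAt
  have hφ : HasDerivAt (fun t : ℝ => t • (y - x) + x) (y - x) 0 := by
    simpa using ((hasDerivAt_id (0 : ℝ)).smul_const (y - x)).add_const x
  have h0 : (0 : ℝ) • (y - x) + x = x := by simp
  have hcomp : HasDerivAt (L ∘ fun t : ℝ => t • (y - x) + x)
      ⟪gradient L x, y - x⟫ 0 := by
    have := (h0 ▸ hgrad).comp_hasDerivAt 0 hφ
    simpa using this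
  have hconv : ConvexOn ℝ Set.univ (L ∘ (AffineMap.lineMap x y : ℝ →ᵃ[ℝ] _)) := by
    have := hc.comp_affineMap (AffineMap.lineMap x y : ℝ →ᵃ[ℝ] _)
    simpa using this
  have heq : (L ∘ (AffineMap.lineMap x y : ℝ →ᵃ[ℝ] _)) =
      (L ∘ fun t : ℝ => t • (y - x) + x) := by
    funext t
    simp only [Function.comp_apply, AffineMap.lineMap_apply_module]
    congr 1
    module
  rw [heq] at hconv
  have hs := hconv.le_slope_of_hasDerivAt (Set.mem_univ (0 : ℝ)) (Set.mem_univ 1)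
    one_pos hcomp
  simp only [slope_def_field, Function.comp_apply, one_smul, zero_smul, zero_add,
    sub_zero, div_one, sub_add_cancel] at hs
  linarith

lemma aux_lower {p : ℕ} (R : EuclideanSpace ℝ (Fin p) → ℝ)
    (hR_nonneg : ∀ x, 0 ≤ R x)
    (hR_add : ∀ x y, R (x + y) ≤ R x + R y)
    (hR_smul : ∀ (c : ℝ) (x : EuclideanSpace ℝ (Fin p)), R (c • x) = |c| * R x)
    (hR_def : ∀ x, R x = 0 → x = 0) :
    ∃ c > 0, ∀ x, c * ‖x‖ ≤ R x := by
  have hR0 : R 0 = 0 := by simpa using hR_smul 0 0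
  have hRneg : ∀ x, R (-x) = R x := by
    intro x
    have := hR_smul (-1) x
    simpa using this
  set C : ℝ := ∑ i : Fin p, R (EuclideanSpace.single i 1) with hC
  have hCnn : 0 ≤ C := Finset.sum_nonneg fun i _ => hR_nonneg _
  have hsum : ∀ (s : Finset (Fin p)) (f : Fin p → EuclideanSpace ℝ (Fin p)),
      R (∑ i ∈ s, f i) ≤ ∑ i ∈ s, R (f i) := by
    intro s f
    induction s using Finset.cons_induction with
    | empty => simp [hR0]
    | cons a s ha ih =>
      rw [Finset.sum_cons, Finset.sum_cons]
      exact le_trans (hR_add _ _) (by linarith)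
  have habs : ∀ (z : EuclideanSpace ℝ (Fin p)) (i : Fin p), |z i| ≤ ‖z‖ := by
    intro z i
    have h1 : ⟪EuclideanSpace.single i (1:ℝ), z⟫ = z i := by
      simp [EuclideanSpace.inner_single_left]
    have h2 := abs_real_inner_le_norm (EuclideanSpace.single i (1:ℝ)) z
    rw [h1] at h2
    simpa [EuclideanSpace.norm_single] using h2
  have hdecomp : ∀ z : EuclideanSpace ℝ (Fin p),
      z = ∑ i : Fin p, z i • EuclideanSpace.single i (1:ℝ) := by
    intro z
    ext j
    have hap : (∑ i : Fin p, z i • EuclideanSpace.single i (1:ℝ)) j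
        = ∑ i : Fin p, (z i • EuclideanSpace.single i (1:ℝ)) j :=
      by rw [WithLp.ofLp_sum]; exact Finset.sum_apply j Finset.univ _
    rw [hap]
    simp [EuclideanSpace.single_apply]
  have hub : ∀ z, R z ≤ C * ‖z‖ := by
    intro z
    calc R z = R (∑ i : Fin p, z i • EuclideanSpace.single i (1:ℝ)) := by rw [← hdecomp]
    _ ≤ ∑ i : Fin p, R (z i • EuclideanSpace.single i (1:ℝ)) := hsum _ _
    _ = ∑ i : Fin p, |z i| * R (EuclideanSpace.single i 1) := by simp [hR_smul]
    _ ≤ ∑ i : Fin p, ‖z‖ * R (EuclideanSpace.single i 1) := by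
        refine Finset.sum_le_sum fun i _ => ?_
        exact mul_le_mul_of_nonneg_right (habs z i) (hR_nonneg _)
    _ = C * ‖z‖ := by rw [← Finset.mul_sum]; ring
  have hcont : Continuous R := by
    refine (LipschitzWith.of_dist_le_mul (K := C.toNNReal) ?_).continuous
    intro x y
    rw [Real.coe_toNNReal _ hCnn, Real.dist_eq, dist_eq_norm]
    rw [abs_le]
    constructor
    · have h1 : R y ≤ R x + R (y - x) := by
        have := hR_add x (y - x); simpa using this
      have h2 : R (y - x) ≤ C * ‖y - x‖ := hub _
      have h3 : ‖y - x‖ = ‖x - y‖ := by rw [norm_sub_rev]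
      linarith [h3 ▸ h2]
    · have h1 : R x ≤ R y + R (x - y) := by
        have := hR_add y (x - y); simpa using this
      linarith [hub (x - y)]
  rcases subsingleton_or_nontrivial (EuclideanSpace ℝ (Fin p)) with hsub | hnt
  · refine ⟨1, one_pos, fun x => ?_⟩
    have : x = 0 := Subsingleton.elim x 0
    simp [this, hR0]
  · obtain ⟨z, hz, hmin⟩ := (isCompact_sphere (0 : EuclideanSpace ℝ (Fin p)) 1).exists_isMinOn
      (NormedSpace.sphere_nonempty.mpr zero_le_one) hcont.continuousOn
    have hznorm : ‖z‖ = 1 := by simpa using mem_sphere_zero_iff_norm.mp hz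
    have hzne : z ≠ 0 := by
      intro h; rw [h] at hznorm; simp at hznorm
    have hcpos : 0 < R z := by
      rcases lt_or_eq_of_le (hR_nonneg z) with h | h
      · exact h
      · exact absurd (hR_def z h.symm) hzne
    refine ⟨R z, hcpos, fun x => ?_⟩
    rcases eq_or_ne x 0 with rfl | hx
    · simp [hR0]
    · have hnx : 0 < ‖x‖ := norm_pos_iff.mpr hx
      have hu : (‖x‖⁻¹ • x) ∈ Metric.sphere (0 : EuclideanSpace ℝ (Fin p)) 1 := by
        rw [mem_sphere_zero_iff_norm, norm_smul, norm_inv, norm_norm]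
        field_simp
      have hthis : R z ≤ R (‖x‖⁻¹ • x) := hmin hu
      rw [hR_smul] at hthis
      have habs' : |‖x‖⁻¹| = ‖x‖⁻¹ := abs_of_pos (by positivity)
      rw [habs'] at hthis
      have this := hthis
      calc R z * ‖x‖ ≤ (‖x‖⁻¹ * R x) * ‖x‖ := by
            exact mul_le_mul_of_nonneg_right this hnx.le
      _ = R x := by field_simp

/-- Cone-type bound for Lagrangian fine-tuning: if `δ̂` minimizes `L + λR` with
`λ ≥ 2 R*(∇L(δ*))` and `R(δ*) ≤ l`, then `R(δ̂ − δ*) ≤ 4 l`. -/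
theorem stmt5 {p : ℕ}
    (L : EuclideanSpace ℝ (Fin p) → ℝ)
    (hL_convex : ConvexOn ℝ Set.univ L)
    (hL_diff : Differentiable ℝ L)
    (R Rstar : EuclideanSpace ℝ (Fin p) → ℝ)
    (hR_nonneg : ∀ x, 0 ≤ R x)
    (hR_add : ∀ x y, R (x + y) ≤ R x + R y)
    (hR_smul : ∀ (c : ℝ) (x : EuclideanSpace ℝ (Fin p)), R (c • x) = |c| * R x)
    (hR_def : ∀ x, R x = 0 → x = 0)
    (hRstar : ∀ v, Rstar v = sSup {y | ∃ u, R u ≤ 1 ∧ y = ⟪u, v⟫})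
    (δs : EuclideanSpace ℝ (Fin p)) (l : ℝ) (hδs : R δs ≤ l)
    (lam : ℝ) (hlam_pos : 0 < lam)
    (hlam : 2 * Rstar (gradient L δs) ≤ lam)
    (δhat : EuclideanSpace ℝ (Fin p))
    (hmin : ∀ δ, L δhat + lam * R δhat ≤ L δ + lam * R δ) :
    R (δhat - δs) ≤ 4 * l := by
  obtain ⟨c, hcpos, hlow⟩ := aux_lower R hR_nonneg hR_add hR_smul hR_def
  have hR0 : R 0 = 0 := by simpa using hR_smul 0 0
  have hRneg : ∀ x, R (-x) = R x := by
    intro x; simpa using hR_smul (-1) x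
  have hl0 : (0 : ℝ) ≤ l := le_trans (hR_nonneg δs) hδs
  set g := gradient L δs with hg
  set Δ := δhat - δs with hΔ
  have hbdd : BddAbove {y | ∃ u, R u ≤ 1 ∧ y = ⟪u, g⟫} := by
    refine ⟨c⁻¹ * ‖g‖, fun y hy => ?_⟩
    obtain ⟨u, hu, rfl⟩ := hy
    have h1 : ⟪u, g⟫ ≤ ‖u‖ * ‖g‖ := real_inner_le_norm u g
    have h2 : c * ‖u‖ ≤ 1 := le_trans (hlow u) hu
    have h3 : ‖u‖ ≤ c⁻¹ := by
      have h4 := mul_le_mul_of_nonneg_left h2 (inv_nonneg.mpr hcpos.le)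
      rwa [← mul_assoc, inv_mul_cancel₀ hcpos.ne', one_mul, mul_one] at h4
    calc ⟪u, g⟫ ≤ ‖u‖ * ‖g‖ := h1
    _ ≤ c⁻¹ * ‖g‖ := mul_le_mul_of_nonneg_right h3 (norm_nonneg g)
  have hdual : ∀ u, R u ≤ 1 → ⟪u, g⟫ ≤ Rstar g := by
    intro u hu
    rw [hRstar]
    exact le_csSup hbdd ⟨u, hu, rfl⟩
  have hRs2 : Rstar g ≤ lam / 2 := by linarith
  have hinner : -⟪g, Δ⟫ ≤ (lam / 2) * R Δ := by
    rcases eq_or_ne (R Δ) 0 with h0 | h0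
    · have hz : Δ = 0 := hR_def _ h0
      simp [hz, hR0]
    · have hpos : 0 < R Δ := lt_of_le_of_ne (hR_nonneg Δ) (Ne.symm h0)
      have hu1 : R ((R Δ)⁻¹ • (-Δ)) ≤ 1 := by
        rw [hR_smul, hRneg, abs_of_pos (by positivity)]
        rw [inv_mul_cancel₀ h0]
      have h2 := hdual _ hu1
      rw [real_inner_smul_left, inner_neg_left] at h2
      have h3 : -⟪Δ, g⟫ ≤ (lam / 2) * R Δ := by
        have h4 : (R Δ)⁻¹ * -⟪Δ, g⟫ ≤ lam / 2 := le_trans h2 hRs2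
        have h5 := mul_le_mul_of_nonneg_right h4 hpos.le
        rwa [mul_comm ((R Δ)⁻¹) _, mul_assoc, inv_mul_cancel₀ h0, mul_one] at h5
      rw [real_inner_comm]
      exact h3
  have hgrad : L δs + ⟪g, Δ⟫ ≤ L δhat := aux_grad L hL_convex hL_diff δs δhat
  have hmins := hmin δs
  have htri : R Δ ≤ R δhat + R δs := by
    have h := hR_add δhat (-δs)
    rw [hRneg] at h
    rw [hΔ]
    simpa [sub_eq_add_neg] using h
  have hD : lam * R Δ ≤ lam * R δhat + lam * R δs := by
    have := mul_le_mul_of_nonneg_left htri hlam_pos.le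
    linarith [this]
  have hE : lam * R δs ≤ lam * l := mul_le_mul_of_nonneg_left hδs hlam_pos.le
  have hfin : lam * R Δ ≤ lam * (4 * l) := by nlinarith
  exact le_of_mul_le_mul_left hfin hlam_pos
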